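/- Given a quantum c-coloring {P_{v,k}} of a graph G with adjacency matrix A, the pinching defined by the projectors P_k = Σ_{v∈V} e_v e_v† ⊗ P_{v,k} annihilates A ⊗ I_d, i.e., Σ_{k∈[c]} P_k (A ⊗ I_d) P_k = 0. -/

import Mathlib

open Matrix BigOperators Kronecker

/-- A quantum `c`-coloring of `G` in dimension `d`. -/
def IsQuantumColoring {n d c : ℕ} (G : SimpleGraph (Fin n))
    (P : Fin n → Fin c → Matrix (Fin d) (Fin d) ℂ) : Prop :=
  (∀ v k, (P v k).IsHermitian) ∧
  (∀ v k, P v k * P v k = P v k) ∧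
  (∀ v, ∑ k, P v k = 1) ∧
  (∀ v w, G.Adj v w → ∀ k, P v k * P w k = 0)

/-- The pinching induced by a quantum coloring annihilates `A ⊗ I_d`. -/
theorem pinching_annihilates_adjMatrix {n d c : ℕ} (G : SimpleGraph (Fin n))
    [DecidableRel G.Adj]
    (P : Fin n → Fin c → Matrix (Fin d) (Fin d) ℂ)
    (hP : IsQuantumColoring G P) :
    ∑ k : Fin c,
      (∑ v, Matrix.single v v (1 : ℂ) ⊗ₖ P v k) *
        (G.adjMatrix ℂ ⊗ₖ (1 : Matrix (Fin d) (Fin d) ℂ)) *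
        (∑ v, Matrix.single v v (1 : ℂ) ⊗ₖ P v k) = 0 := by
  obtain ⟨hherm, hidem, hcomp, horth⟩ := hP
  apply Finset.sum_eq_zero
  intro k _
  rw [Finset.sum_mul, Finset.sum_mul]
  apply Finset.sum_eq_zero
  intro v _
  rw [Finset.mul_sum]
  apply Finset.sum_eq_zero
  intro w _
  rw [← Matrix.mul_kronecker_mul, ← Matrix.mul_kronecker_mul, mul_one]
  by_cases h : G.Adj v w
  · rw [horth v w h k, Matrix.kronecker_zero]
  · have hA : (Matrix.single v v (1 : ℂ) * G.adjMatrix ℂ) *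
        Matrix.single w w (1 : ℂ) = 0 := by
      ext i j
      simp [Matrix.mul_apply, Matrix.single, ite_and]
      intro hjw
      refine Finset.sum_eq_zero fun x _ => ?_
      by_cases hx : v = x
      · subst hx; simp [h]
      · simp [hx]
    rw [hA, Matrix.zero_kronecker]
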